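/- Let R be a dg-ring, P a filtered poset, and R{P} the free dg-category on P. Then the constant weight c_{P^op} : R{P}^op → dgm(R), sending each object to R, is h-flat: for every acyclic dg R{P}^op-module N, the tensor product c_{P^op} ⊗_{R{P}} N is acyclic. -/

import Mathlib

/-!
STATEMENT 7: The constant weight on a filtered poset is h-flat: tensoring an
acyclic dg-module with it — i.e. taking the filtered colimit of a diagram of
acyclic dg `R`-modules (cochain complexes of `R`-modules) indexed by a filtered
poset — yields an acyclic complex.
-/

open CategoryTheory Limits

private lemma stmt7_comp_apply {R : Type} [Ring R] {M N U : ModuleCat.{0} R}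
    (f : M ⟶ N) (g : N ⟶ U) (x : M) : (f ≫ g) x = g (f x) := rfl

theorem stmt7 {R : Type} [Ring R] {P : Type} [PartialOrder P]
    [Nonempty P] [IsDirected P (· ≤ ·)]
    (N : P ⥤ CochainComplex (ModuleCat.{0} R) ℤ)
    (hN : ∀ (p : P) (k : ℤ), (N.obj p).ExactAt k) :
    ∀ k : ℤ, (colimit N).ExactAt k := by
  intro k
  rw [HomologicalComplex.exactAt_iff' _ (k - 1) k (k + 1)
      (by simp [CochainComplex.prev]) (by simp [CochainComplex.next]),
    ShortComplex.moduleCat_exact_iff]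
  intro x hx
  -- notation
  set ev : ∀ i : ℤ, CochainComplex (ModuleCat.{0} R) ℤ ⥤ ModuleCat.{0} R :=
    fun i => HomologicalComplex.eval _ _ i with hev
  -- `x : (colimit N).X k`, represent it in the colimit of evaluations
  obtain ⟨p, y, hy⟩ := Concrete.colimit_exists_rep (N ⋙ ev k)
    ((preservesColimitIso (ev k) N).hom x)
  have hx' : x = ((colimit.ι N p).f k) y := by
    have := congrArg ((preservesColimitIso (ev k) N).inv) hy
    erw [Iso.hom_inv_id_apply] at this
    rw [← this]
    exact (ConcreteCategory.congr_hom (ι_preservesColimitIso_inv (ev k) N p) y)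
  -- push the vanishing of the differential into some stage q
  have hd : ((colimit.ι N p).f (k + 1)) ((N.obj p).d k (k + 1) y) = 0 := by
    have comm := (colimit.ι N p).comm k (k + 1)
    have : ((colimit.ι N p).f k ≫ (colimit N).d k (k + 1)) y = 0 := by
      erw [stmt7_comp_apply, ← hx']
      exact hx
    rw [comm] at this
    erw [stmt7_comp_apply] at this
    exact this
  have hd2 : colimit.ι (N ⋙ ev (k + 1)) p ((N.obj p).d k (k + 1) y) = 0 := by
    have := congrArg ((preservesColimitIso (ev (k + 1)) N).hom)
      (show ((ev (k + 1)).map (colimit.ι N p)) ((N.obj p).d k (k + 1) y) = 0 from hd)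
    erw [← stmt7_comp_apply, ι_preservesColimitIso_hom, map_zero] at this
    exact this
  obtain ⟨q, e, he⟩ := Concrete.colimit_rep_eq_zero R (N ⋙ ev (k + 1)) p _ hd2
  -- `he : ((N.map e).f (k+1)) ((N.obj p).d k (k+1) y) = 0`
  have he' : (N.obj q).d k (k + 1) (((N.map e).f k) y) = 0 := by
    have comm := (N.map e).comm k (k + 1)
    have : ((N.obj p).d k (k + 1) ≫ (N.map e).f (k + 1)) y = 0 := by
      erw [stmt7_comp_apply]; exact he
    rw [← comm] at this
    erw [stmt7_comp_apply] at this
    exact this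
  -- exactness at stage q
  have hq : ((N.obj q).sc' (k - 1) k (k + 1)).Exact := by
    rw [← HomologicalComplex.exactAt_iff' _ (k - 1) k (k + 1)
      (by simp [CochainComplex.prev]) (by simp [CochainComplex.next])]
    exact hN q k
  rw [ShortComplex.moduleCat_exact_iff] at hq
  obtain ⟨z, hz⟩ := hq (((N.map e).f k) y) he'
  have hz' : ((N.obj q).d (k - 1) k) z = ((N.map e).f k) y := hz
  -- `hz : (N.obj q).d (k-1) k z = ((N.map e).f k) y`
  refine ⟨((colimit.ι N q).f (k - 1)) z, ?_⟩
  show ((colimit N).d (k - 1) k) (((colimit.ι N q).f (k - 1)) z) = x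
  have comm := (colimit.ι N q).comm (k - 1) k
  calc ((colimit N).d (k - 1) k) (((colimit.ι N q).f (k - 1)) z)
      = ((colimit.ι N q).f (k - 1) ≫ (colimit N).d (k - 1) k) z := by
        erw [stmt7_comp_apply]
    _ = ((N.obj q).d (k - 1) k ≫ (colimit.ι N q).f k) z := by rw [comm]
    _ = ((colimit.ι N q).f k) (((N.map e).f k) y) := by erw [stmt7_comp_apply, hz']
    _ = ((N.map e ≫ colimit.ι N q).f k) y := by
        rw [HomologicalComplex.comp_f]
        erw [stmt7_comp_apply]
    _ = ((colimit.ι N p).f k) y := by rw [colimit.w]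
    _ = (show (colimit N).X k from x) := hx'.symm
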